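/- The subring QSym_{2,(x)}(ℂ[x]) of ℂ[x₁,x₂] (the quasisymmetric polynomials in two variables) is generated as a ℂ-algebra by the three elements x₁x₂, x₁+x₂, and x₁²x₂. -/
import Mathlib


open MvPolynomial Finset

open Classical in
/-- The monomial quasisymmetric polynomial `M_α(x₁,x₂)` in two variables,
for a composition `α` (recorded as a list of positive integers). -/
noncomputable def monomialQSym2 (α : List ℕ) : MvPolynomial (Fin 2) ℂ :=
  ∑ i ∈ Finset.univ.filter (fun i : Fin α.length → Fin 2 => StrictMono i),
    ∏ ℓ : Fin α.length, X (i ℓ) ^ α.get ℓ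

open Classical in
lemma mq_nil : monomialQSym2 [] = 1 := by
  rw [monomialQSym2]
  show (∑ i ∈ Finset.univ.filter (fun i : Fin 0 → Fin 2 => StrictMono i),
    ∏ ℓ : Fin 0, X (i ℓ) ^ ([] : List ℕ).get ℓ) = 1
  rw [Finset.filter_true_of_mem (fun i _ => Subsingleton.strictMono i)]
  simp

open Classical in
lemma mq_one (a : ℕ) : monomialQSym2 [a] = X 0 ^ a + X 1 ^ a := by
  rw [monomialQSym2]
  show (∑ i ∈ Finset.univ.filter (fun i : Fin 1 → Fin 2 => StrictMono i),
    ∏ ℓ : Fin 1, X (i ℓ) ^ [a].get ℓ) = _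
  rw [Finset.filter_true_of_mem (fun i _ => Subsingleton.strictMono i)]
  rw [Fintype.sum_equiv (Equiv.funUnique (Fin 1) (Fin 2)) _ (fun j => X j ^ a)]
  · simp [Fin.sum_univ_two]
  · intro i; simp [Equiv.funUnique]

open Classical in
lemma mq_two (a b : ℕ) : monomialQSym2 [a, b] = X 0 ^ a * X 1 ^ b := by
  rw [monomialQSym2]
  show (∑ i ∈ Finset.univ.filter (fun i : Fin 2 → Fin 2 => StrictMono i),
    ∏ ℓ : Fin 2, X (i ℓ) ^ [a, b].get ℓ) = _
  have hf : Finset.univ.filter (fun i : Fin 2 → Fin 2 => StrictMono i) = {id} := by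
    ext i
    simp only [Finset.mem_filter, Finset.mem_univ, true_and, Finset.mem_singleton]
    constructor
    · intro h
      have h01 : i 0 < i 1 := h (by decide)
      rw [Fin.lt_def] at h01
      have hlt := (i 1).isLt
      have e0 : i 0 = 0 := by apply Fin.ext; simp; omega
      have e1 : i 1 = 1 := by apply Fin.ext; simp; omega
      funext j
      fin_cases j
      · simpa using e0
      · simpa using e1
    · rintro rfl; exact strictMono_id
  rw [hf]
  simp [Fin.prod_univ_two]

/-- The generating set. -/
noncomputable def qsGens : Set (MvPolynomial (Fin 2) ℂ) :=
  {X 0 * X 1, X 0 + X 1, X 0 ^ 2 * X 1}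

noncomputable abbrev qsA : Subalgebra ℂ (MvPolynomial (Fin 2) ℂ) := Algebra.adjoin ℂ qsGens

lemma mem_e2 : (X 0 * X 1 : MvPolynomial (Fin 2) ℂ) ∈ qsA :=
  Algebra.subset_adjoin (by simp [qsGens])

lemma mem_p1 : (X 0 + X 1 : MvPolynomial (Fin 2) ℂ) ∈ qsA :=
  Algebra.subset_adjoin (by simp [qsGens])

lemma mem_m2 : (X 0 ^ 2 * X 1 : MvPolynomial (Fin 2) ℂ) ∈ qsA :=
  Algebra.subset_adjoin (by simp [qsGens])

lemma mem_psum : ∀ a : ℕ, (X 0 ^ a + X 1 ^ a : MvPolynomial (Fin 2) ℂ) ∈ qsA := by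
  intro a
  induction a using Nat.strong_induction_on with
  | _ a ih =>
    match a with
    | 0 => show ((1 : MvPolynomial (Fin 2) ℂ) + 1) ∈ qsA; exact qsA.add_mem qsA.one_mem qsA.one_mem
    | 1 => simpa using mem_p1
    | (a+2) =>
      have key : (X 0 ^ (a+2) + X 1 ^ (a+2) : MvPolynomial (Fin 2) ℂ)
          = (X 0 ^ (a+1) + X 1 ^ (a+1)) * (X 0 + X 1) - (X 0 ^ a + X 1 ^ a) * (X 0 * X 1) := by
        ring
      rw [key]
      exact qsA.sub_mem (qsA.mul_mem (ih (a+1) (by omega)) mem_p1)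
        (qsA.mul_mem (ih a (by omega)) mem_e2)

lemma mem_ma1 : ∀ a : ℕ, (X 0 ^ (a+1) * X 1 : MvPolynomial (Fin 2) ℂ) ∈ qsA := by
  intro a
  induction a using Nat.strong_induction_on with
  | _ a ih =>
    match a with
    | 0 => simpa using mem_e2
    | 1 => simpa using mem_m2
    | (a+2) =>
      have key : (X 0 ^ (a+3) * X 1 : MvPolynomial (Fin 2) ℂ)
          = (X 0 ^ (a+2) * X 1) * (X 0 + X 1) - (X 0 ^ (a+1) * X 1) * (X 0 * X 1) := by
        ring
      rw [key]
      exact qsA.sub_mem (qsA.mul_mem (ih (a+1) (by omega)) mem_p1)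
        (qsA.mul_mem (ih a (by omega)) mem_e2)

lemma mem_m1b (b : ℕ) : (X 0 * X 1 ^ (b+1) : MvPolynomial (Fin 2) ℂ) ∈ qsA := by
  have key : (X 0 * X 1 ^ (b+1) : MvPolynomial (Fin 2) ℂ)
      = (X 0 * X 1) * (X 0 ^ b + X 1 ^ b) - X 0 ^ (b+1) * X 1 := by ring
  rw [key]
  exact qsA.sub_mem (qsA.mul_mem mem_e2 (mem_psum b)) (mem_ma1 b)

lemma mem_mab : ∀ a b : ℕ, (X 0 ^ (a+1) * X 1 ^ (b+1) : MvPolynomial (Fin 2) ℂ) ∈ qsA := by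
  intro a
  induction a with
  | zero => intro b; simpa using mem_m1b b
  | succ a ih =>
    intro b
    match b with
    | 0 => simpa using mem_ma1 (a+1)
    | (b+1) =>
      have key : (X 0 ^ (a+2) * X 1 ^ (b+2) : MvPolynomial (Fin 2) ℂ)
          = (X 0 * X 1) * (X 0 ^ (a+1) * X 1 ^ (b+1)) := by ring
      rw [key]
      exact qsA.mul_mem mem_e2 (ih b)

/-- The spanning set of monomial quasisymmetric polynomials. -/
def qsSet : Set (MvPolynomial (Fin 2) ℂ) :=
  {p : MvPolynomial (Fin 2) ℂ |
    ∃ α : List ℕ, α.length ≤ 2 ∧ (∀ a ∈ α, 0 < a) ∧ p = monomialQSym2 α}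

lemma one_mem_qsSet : (1 : MvPolynomial (Fin 2) ℂ) ∈ qsSet :=
  ⟨[], by simp, by simp, mq_nil.symm⟩

lemma psum_mem_qsSet (a : ℕ) (ha : 0 < a) : (X 0 ^ a + X 1 ^ a : MvPolynomial (Fin 2) ℂ) ∈ qsSet :=
  ⟨[a], by simp, by simpa using ha, (mq_one a).symm⟩

lemma mab_mem_qsSet (a b : ℕ) (ha : 0 < a) (hb : 0 < b) :
    (X 0 ^ a * X 1 ^ b : MvPolynomial (Fin 2) ℂ) ∈ qsSet :=
  ⟨[a, b], by simp, by simp [ha, hb], (mq_two a b).symm⟩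

lemma qsSet_mul_mem {p q : MvPolynomial (Fin 2) ℂ} (hp : p ∈ qsSet) (hq : q ∈ qsSet) :
    p * q ∈ Submodule.span ℂ qsSet := by
  obtain ⟨α, hαl, hαp, rfl⟩ := hp
  obtain ⟨β, hβl, hβp, rfl⟩ := hq
  have sub := Submodule.subset_span (R := ℂ) (s := qsSet)
  rcases α with _ | ⟨a, _ | ⟨b, _ | ⟨c, t⟩⟩⟩
  · rw [mq_nil, one_mul]; exact sub ⟨β, hβl, hβp, rfl⟩
  · rcases β with _ | ⟨c, _ | ⟨d, _ | ⟨e, t⟩⟩⟩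
    · rw [mq_nil, mul_one]; exact sub ⟨[a], hαl, hαp, rfl⟩
    · -- [a] * [c]
      have ha : 0 < a := hαp a (by simp)
      have hc : 0 < c := hβp c (by simp)
      have key : monomialQSym2 [a] * monomialQSym2 [c]
          = (X 0 ^ (a+c) + X 1 ^ (a+c)) + (X 0 ^ a * X 1 ^ c) + (X 0 ^ c * X 1 ^ a) := by
        rw [mq_one, mq_one]; ring
      rw [key]
      exact Submodule.add_mem _ (Submodule.add_mem _
        (sub (psum_mem_qsSet _ (by omega)))
        (sub (mab_mem_qsSet a c ha hc))) (sub (mab_mem_qsSet c a hc ha))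
    · -- [a] * [c,d]
      have ha : 0 < a := hαp a (by simp)
      have hc : 0 < c := hβp c (by simp)
      have hd : 0 < d := hβp d (by simp)
      have key : monomialQSym2 [a] * monomialQSym2 [c, d]
          = X 0 ^ (a+c) * X 1 ^ d + X 0 ^ c * X 1 ^ (a+d) := by
        rw [mq_one, mq_two]; ring
      rw [key]
      exact Submodule.add_mem _ (sub (mab_mem_qsSet _ _ (by omega) hd))
        (sub (mab_mem_qsSet _ _ hc (by omega)))
    · simp at hβl
  · rcases β with _ | ⟨c, _ | ⟨d, _ | ⟨e, t⟩⟩⟩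
    · rw [mq_nil, mul_one]; exact sub ⟨[a, b], hαl, hαp, rfl⟩
    · -- [a,b] * [c]
      have ha : 0 < a := hαp a (by simp)
      have hb : 0 < b := hαp b (by simp)
      have hc : 0 < c := hβp c (by simp)
      have key : monomialQSym2 [a, b] * monomialQSym2 [c]
          = X 0 ^ (c+a) * X 1 ^ b + X 0 ^ a * X 1 ^ (c+b) := by
        rw [mq_one, mq_two]; ring
      rw [key]
      exact Submodule.add_mem _ (sub (mab_mem_qsSet _ _ (by omega) hb))
        (sub (mab_mem_qsSet _ _ ha (by omega)))
    · -- [a,b] * [c,d]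
      have ha : 0 < a := hαp a (by simp)
      have hb : 0 < b := hαp b (by simp)
      have hc : 0 < c := hβp c (by simp)
      have hd : 0 < d := hβp d (by simp)
      have key : monomialQSym2 [a, b] * monomialQSym2 [c, d]
          = X 0 ^ (a+c) * X 1 ^ (b+d) := by
        rw [mq_two, mq_two]; ring
      rw [key]
      exact sub (mab_mem_qsSet _ _ (by omega) (by omega))
    · simp at hβl
  · simp at hαl

lemma span_mul_closed : ∀ x y : MvPolynomial (Fin 2) ℂ, x ∈ Submodule.span ℂ qsSet →
    y ∈ Submodule.span ℂ qsSet → x * y ∈ Submodule.span ℂ qsSet := by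
  have h : Submodule.span ℂ qsSet * Submodule.span ℂ qsSet ≤ Submodule.span ℂ qsSet := by
    rw [Submodule.span_mul_span]
    rw [Submodule.span_le]
    rintro _ ⟨p, hp, q, hq, rfl⟩
    exact qsSet_mul_mem hp hq
  intro x y hx hy
  exact h (Submodule.mul_mem_mul hx hy)

/-- `QSym₂`, the ring of quasisymmetric polynomials in two variables (the span of
the monomial quasisymmetric polynomials `M_α(x₁,x₂)` over compositions `α` of
length at most `2`), is generated as a `ℂ`-algebra by `x₁x₂`, `x₁+x₂`, `x₁²x₂`. -/
theorem qsym2_generators :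
    Subalgebra.toSubmodule
        (Algebra.adjoin ℂ
          ({X 0 * X 1, X 0 + X 1, X 0 ^ 2 * X 1} : Set (MvPolynomial (Fin 2) ℂ)))
      = Submodule.span ℂ
          {p : MvPolynomial (Fin 2) ℂ |
            ∃ α : List ℕ, α.length ≤ 2 ∧ (∀ a ∈ α, 0 < a) ∧ p = monomialQSym2 α} := by
  have hset : {p : MvPolynomial (Fin 2) ℂ |
      ∃ α : List ℕ, α.length ≤ 2 ∧ (∀ a ∈ α, 0 < a) ∧ p = monomialQSym2 α} = qsSet := rfl
  rw [hset]
  apply le_antisymm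
  · -- adjoin ≤ span: via subalgebra structure on span
    let B : Subalgebra ℂ (MvPolynomial (Fin 2) ℂ) :=
      (Submodule.span ℂ qsSet).toSubalgebra (Submodule.subset_span one_mem_qsSet)
        span_mul_closed
    have hle : Algebra.adjoin ℂ qsGens ≤ B := by
      apply Algebra.adjoin_le
      intro x hx
      rcases hx with h | h | h
      · subst h
        exact Submodule.subset_span (by simpa using mab_mem_qsSet 1 1 one_pos one_pos)
      · subst h
        exact Submodule.subset_span (by simpa using psum_mem_qsSet 1 one_pos)
      · rw [Set.mem_singleton_iff] at h; subst h
        exact Submodule.subset_span (by simpa using mab_mem_qsSet 2 1 (by norm_num) one_pos)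
    exact fun x hx => hle hx
  · rw [Submodule.span_le]
    rintro p ⟨α, hαl, hαp, rfl⟩
    show _ ∈ qsA
    rcases α with _ | ⟨a, _ | ⟨b, _ | ⟨c, t⟩⟩⟩
    · rw [mq_nil]; exact qsA.one_mem
    · rw [mq_one]; exact mem_psum a
    · have ha : 0 < a := hαp a (by simp)
      have hb : 0 < b := hαp b (by simp)
      obtain ⟨a', rfl⟩ : ∃ a', a = a' + 1 := ⟨a - 1, by omega⟩
      obtain ⟨b', rfl⟩ : ∃ b', b = b' + 1 := ⟨b - 1, by omega⟩
      rw [mq_two]; exact mem_mab a' b'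
    · simp at hαl
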